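/- Let G be a finite strategic game such that for every player i there exists a Nash equilibrium σ⁽ⁱ⁾ of G in which player i's payoff strictly exceeds his minmax payoff vᵢ, and suppose there exists a feasible and individually rational payoff profile p of G. Then there exists a constant c ∈ ℕ (independent of n) such that for all sufficiently large n, the n-stage repeated game of G has a Nash equilibrium in which, along every on-path history, each player i plays a mixed (non-pure) stage strategy in at most c stages; in particular the effective entropy of player i's equilibrium strategy is at most c·βᵢ, where βᵢ bounds the entropy of player i's strategy in any Nash equilibrium of G. -/

import Mathlib

/-- A mixed strategy over a finite action set. -/
def IsMixed {α : Type} [Fintype α] (σ : α → ℝ) : Prop :=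
  (∀ a, 0 ≤ σ a) ∧ ∑ a, σ a = 1

/-- The pure (point-mass) strategy on action `a`. -/
def pureS {α : Type} [DecidableEq α] (a : α) : α → ℝ := fun b => if b = a then 1 else 0

variable {N : Type} [Fintype N] [DecidableEq N] {A : N → Type}
  [∀ i, Fintype (A i)] [∀ i, DecidableEq (A i)] [∀ i, Nonempty (A i)]

/-- Expected utility of a utility function under an independent mixed strategy profile. -/
def expU (u : (∀ i, A i) → ℝ) (σ : ∀ i, A i → ℝ) : ℝ :=
  ∑ a : ∀ i, A i, (∏ i, σ i (a i)) * u a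

/-- Nash equilibrium of the finite strategic game with utilities `u`. -/
def IsNash (u : N → (∀ i, A i) → ℝ) (σ : ∀ i, A i → ℝ) : Prop :=
  (∀ i, IsMixed (σ i)) ∧
  ∀ i (τ : A i → ℝ), IsMixed τ → expU (u i) (Function.update σ i τ) ≤ expU (u i) σ

/-- `vi` is the minmax payoff of player `i`: the least payoff the other players can
force on player `i` (who best-responds with a pure action). -/
def IsMinmaxVal (u : N → (∀ i, A i) → ℝ) (i : N) (vi : ℝ) : Prop :=
  IsLeast {x : ℝ | ∃ σ : ∀ j, A j → ℝ, (∀ j, IsMixed (σ j)) ∧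
    x = Finset.univ.sup' Finset.univ_nonempty
          (fun a : A i => expU (u i) (Function.update σ i (pureS a)))} vi

/-- Probability that, starting from history `h`, the play under behavioral profile `σ`
follows exactly the sequence of action profiles `l`. -/
def histProb (σ : ∀ i, List (∀ j, A j) → A i → ℝ) :
    List (∀ i, A i) → List (∀ i, A i) → ℝ
  | _, [] => 1
  | h, a :: rest => (∏ i, σ i h (a i)) * histProb σ (h ++ [a]) rest

/-- Expected average payoff of player `i` in the `n`-stage repeated game. -/
noncomputable def avgPay (n : ℕ) (u : N → (∀ i, A i) → ℝ) (i : N)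
    (σ : ∀ i, List (∀ j, A j) → A i → ℝ) : ℝ :=
  ∑ f : Fin n → (∀ i, A i), histProb σ [] (List.ofFn f) * ((∑ t, u i (f t)) / n)

/-- Nash equilibrium of the `n`-stage repeated game (behavioral strategies,
average payoffs). -/
def IsRepNash (n : ℕ) (u : N → (∀ i, A i) → ℝ)
    (σ : ∀ i, List (∀ j, A j) → A i → ℝ) : Prop :=
  (∀ i h, IsMixed (σ i h)) ∧
  ∀ i τ, (∀ h, IsMixed (τ h)) →
    avgPay n u i (Function.update σ i τ) ≤ avgPay n u i σ

/-- Shannon entropy (base 2) of a mixed strategy, with the convention 0·log 0 = 0. -/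
noncomputable def ent {α : Type} [Fintype α] (σ : α → ℝ) : ℝ :=
  ∑ a, -(σ a * Real.logb 2 (σ a))

/-- Shannon entropy of a behavioral strategy of player `i` in the `n`-stage repeated
game: the maximum over terminal histories of the summed stage entropies along the
non-terminal prefixes. -/
noncomputable def repEnt (n : ℕ) {i : N} (σi : List (∀ j, A j) → A i → ℝ) : ℝ :=
  Finset.univ.sup' Finset.univ_nonempty
    (fun f : Fin n → (∀ i, A i) => ∑ t : Fin n, ent (σi ((List.ofFn f).take t)))

/-- Effective Shannon entropy of player `i`'s behavioral strategy in profile `σ`: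
the supremum of summed stage entropies along terminal histories of positive
probability under `σ`. -/
noncomputable def effEnt (n : ℕ) (σ : ∀ i, List (∀ j, A j) → A i → ℝ) (i : N) : ℝ :=
  sSup {x : ℝ | ∃ f : Fin n → (∀ i, A i), 0 < histProb σ [] (List.ofFn f) ∧
    x = ∑ t : Fin n, ent (σ i ((List.ofFn f).take t))}
section FolkAux

set_option linter.unusedSectionVars false

open Finset

variable {N : Type} [Fintype N] [DecidableEq N] {A : N → Type}
  [∀ i, Fintype (A i)] [∀ i, DecidableEq (A i)] [∀ i, Nonempty (A i)]

lemma pureS_isMixed {α : Type} [Fintype α] [DecidableEq α] (a : α) : IsMixed (pureS a) := by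
  constructor
  · intro b; unfold pureS; split <;> norm_num
  · simp [pureS]

lemma ent_pureS {α : Type} [Fintype α] [DecidableEq α] (a : α) : ent (pureS a) = 0 := by
  unfold ent pureS
  apply Finset.sum_eq_zero
  intro b _
  by_cases h : b = a <;> simp [h]

lemma ent_nonneg {α : Type} [Fintype α] (σ : α → ℝ) (hσ : IsMixed σ) : 0 ≤ ent σ := by
  apply Finset.sum_nonneg
  intro b _
  have h1 : σ b ≤ 1 := by
    rw [← hσ.2]
    exact Finset.single_le_sum (fun c _ => hσ.1 c) (Finset.mem_univ b)
  have : σ b * Real.logb 2 (σ b) ≤ 0 :=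
    mul_nonpos_of_nonneg_of_nonpos (hσ.1 b) (Real.logb_nonpos one_lt_two (hσ.1 b) h1)
  linarith

lemma sum_prod_pi (σ : ∀ i, A i → ℝ) :
    ∑ a : ∀ i, A i, ∏ i, σ i (a i) = ∏ i, ∑ b, σ i b := by
  rw [Finset.prod_univ_sum, Fintype.piFinset_univ]

lemma sum_prod_pi_one (σ : ∀ i, A i → ℝ) (hσ : ∀ i, IsMixed (σ i)) :
    ∑ a : ∀ i, A i, ∏ i, σ i (a i) = 1 := by
  rw [sum_prod_pi]
  exact Finset.prod_eq_one (fun i _ => (hσ i).2)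

lemma prod_pi_nonneg (σ : ∀ i, A i → ℝ) (hσ : ∀ i, IsMixed (σ i)) (a : ∀ i, A i) :
    0 ≤ ∏ i, σ i (a i) :=
  Finset.prod_nonneg (fun i _ => (hσ i).1 (a i))

lemma sum_pure_collapse (y : ∀ i, A i) (X : (∀ i, A i) → ℝ) :
    ∑ a : ∀ i, A i, (∏ j, pureS (y j) (a j)) * X a = X y := by
  have : ∀ a : ∀ i, A i, (∏ j, pureS (y j) (a j)) = if a = y then 1 else 0 := by
    intro a
    by_cases h : a = y
    · simp [h, pureS]
    · obtain ⟨j, hj⟩ := Function.ne_iff.mp h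
      rw [if_neg h]
      exact Finset.prod_eq_zero (Finset.mem_univ j) (by simp [pureS, hj])
  simp [this]

lemma expU_congr (u : (∀ i, A i) → ℝ) {σ σ' : ∀ i, A i → ℝ} (h : ∀ i, σ i = σ' i) :
    expU u σ = expU u σ' := by
  have : σ = σ' := funext h
  rw [this]

lemma prod_update_eq (σ : ∀ i, A i → ℝ) (i : N) (ρ : A i → ℝ) (a : ∀ i, A i) :
    ∏ j, Function.update σ i ρ j (a j) = ρ (a i) * ∏ j ∈ univ.erase i, σ j (a j) := by
  rw [← Finset.mul_prod_erase univ _ (Finset.mem_univ i)]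
  congr 1
  · simp
  · apply Finset.prod_congr rfl
    intro j hj
    rw [Function.update_of_ne (Finset.ne_of_mem_erase hj)]

lemma expU_update_mix (u : (∀ i, A i) → ℝ) (σ : ∀ i, A i → ℝ) (i : N) (ρ : A i → ℝ) :
    expU u (Function.update σ i ρ) = ∑ b, ρ b * expU u (Function.update σ i (pureS b)) := by
  unfold expU
  simp only [Finset.mul_sum]
  rw [Finset.sum_comm]
  apply Finset.sum_congr rfl
  intro a _
  rw [prod_update_eq]
  have hcol : ∀ b : A i, ρ b * ((∏ j, Function.update σ i (pureS b) j (a j)) * u a)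
      = (if a i = b then ρ b * ((∏ j ∈ univ.erase i, σ j (a j)) * u a) else 0) := by
    intro b
    rw [prod_update_eq]
    unfold pureS
    by_cases h : a i = b <;> simp [h] <;> ring
  rw [Finset.sum_congr rfl (fun b _ => hcol b)]
  simp [Finset.sum_ite_eq, mul_assoc]

end FolkAux
section FolkAux2

set_option linter.unusedSectionVars false
set_option maxHeartbeats 1000000

open Finset

variable {N : Type} [Fintype N] [DecidableEq N] {A : N → Type}
  [∀ i, Fintype (A i)] [∀ i, DecidableEq (A i)] [∀ i, Nonempty (A i)]

lemma sum_pi_succ (n : ℕ) (P : Type) [Fintype P] (F : (Fin (n+1) → P) → ℝ) :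
    ∑ f : Fin (n+1) → P, F f = ∑ a : P, ∑ f : Fin n → P, F (Fin.cons a f) := by
  rw [← ((Fin.consEquiv (fun _ : Fin (n+1) => P)).symm).symm.sum_comp F, Fintype.sum_prod_type]
  rfl

lemma expU_abs_le (u : (∀ i, A i) → ℝ) (σ : ∀ i, A i → ℝ) (hσ : ∀ i, IsMixed (σ i))
    (M : ℝ) (hM : ∀ a, |u a| ≤ M) : |expU u σ| ≤ M := by
  unfold expU
  calc |∑ a : ∀ i, A i, (∏ i, σ i (a i)) * u a|
      ≤ ∑ a : ∀ i, A i, |(∏ i, σ i (a i)) * u a| := Finset.abs_sum_le_sum_abs _ _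
    _ ≤ ∑ a : ∀ i, A i, (∏ i, σ i (a i)) * M := by
        apply Finset.sum_le_sum
        intro a _
        rw [abs_mul, abs_of_nonneg (prod_pi_nonneg σ hσ a)]
        exact mul_le_mul_of_nonneg_left (hM a) (prod_pi_nonneg σ hσ a)
    _ = M := by rw [← Finset.sum_mul, sum_prod_pi_one σ hσ, one_mul]

lemma expU_update_le_sup (u : (∀ i, A i) → ℝ) (σ : ∀ i, A i → ℝ) (i : N)
    (ρ : A i → ℝ) (hρ : IsMixed ρ) :
    expU u (Function.update σ i ρ) ≤
      Finset.univ.sup' Finset.univ_nonempty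
        (fun b : A i => expU u (Function.update σ i (pureS b))) := by
  rw [expU_update_mix]
  calc ∑ b, ρ b * expU u (Function.update σ i (pureS b))
      ≤ ∑ b, ρ b * Finset.univ.sup' Finset.univ_nonempty
          (fun b : A i => expU u (Function.update σ i (pureS b))) := by
        apply Finset.sum_le_sum
        intro b _
        exact mul_le_mul_of_nonneg_left
          (Finset.le_sup' (fun b : A i => expU u (Function.update σ i (pureS b)))
            (Finset.mem_univ b)) (hρ.1 b)
    _ = _ := by rw [← Finset.sum_mul, hρ.2, one_mul]

/-- Cumulative (total, undiscounted) expected payoff over `k` remaining stages. -/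
noncomputable def cumV (σ : ∀ i, List (∀ j, A j) → A i → ℝ) (g : (∀ i, A i) → ℝ) :
    ℕ → List (∀ i, A i) → ℝ
  | 0, _ => 0
  | k+1, h => ∑ a : ∀ i, A i, (∏ j, σ j h (a j)) * (g a + cumV σ g k (h ++ [a]))

lemma histProb_nonneg (σ : ∀ i, List (∀ j, A j) → A i → ℝ)
    (hσ : ∀ i h, IsMixed (σ i h)) :
    ∀ (l h : List (∀ i, A i)), 0 ≤ histProb σ h l := by
  intro l
  induction l with
  | nil => intro h; simp [histProb]
  | cons a rest ih =>
      intro h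
      exact mul_nonneg (prod_pi_nonneg _ (fun i => hσ i h) a) (ih _)

lemma sum_histProb (σ : ∀ i, List (∀ j, A j) → A i → ℝ)
    (hσ : ∀ i h, IsMixed (σ i h)) :
    ∀ (k : ℕ) (h : List (∀ i, A i)),
      ∑ f : Fin k → (∀ i, A i), histProb σ h (List.ofFn f) = 1 := by
  intro k
  induction k with
  | zero => intro h; simp [histProb]
  | succ k ih =>
      intro h
      rw [sum_pi_succ]
      have : ∀ a : ∀ i, A i, ∑ f : Fin k → (∀ i, A i),
          histProb σ h (List.ofFn (Fin.cons a f))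
          = ∏ j, σ j h (a j) := by
        intro a
        have hof : ∀ f : Fin k → (∀ i, A i),
            List.ofFn (Fin.cons a f) = a :: List.ofFn f := by
          intro f
          rw [List.ofFn_succ]
          simp
        calc ∑ f : Fin k → (∀ i, A i), histProb σ h (List.ofFn (Fin.cons a f))
            = ∑ f : Fin k → (∀ i, A i), (∏ j, σ j h (a j)) * histProb σ (h ++ [a]) (List.ofFn f) := by
              apply Finset.sum_congr rfl
              intro f _
              rw [hof f]
              rfl
          _ = (∏ j, σ j h (a j)) * ∑ f : Fin k → (∀ i, A i), histProb σ (h ++ [a]) (List.ofFn f) := by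
              rw [Finset.mul_sum]
          _ = ∏ j, σ j h (a j) := by rw [ih (h ++ [a]), mul_one]
      rw [Finset.sum_congr rfl (fun a _ => this a)]
      exact sum_prod_pi_one _ (fun j => hσ j h)

lemma cumV_eq_sum (σ : ∀ i, List (∀ j, A j) → A i → ℝ)
    (hσ : ∀ i h, IsMixed (σ i h)) (g : (∀ i, A i) → ℝ) :
    ∀ (k : ℕ) (h : List (∀ i, A i)),
      ∑ f : Fin k → (∀ i, A i), histProb σ h (List.ofFn f) * (∑ t, g (f t))
        = cumV σ g k h := by
  intro k
  induction k with
  | zero => intro h; simp [cumV]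
  | succ k ih =>
      intro h
      rw [sum_pi_succ]
      unfold cumV
      apply Finset.sum_congr rfl
      intro a _
      have hof : ∀ f : Fin k → (∀ i, A i),
          List.ofFn (Fin.cons a f) = a :: List.ofFn f := by
        intro f
        rw [List.ofFn_succ]
        simp
      calc ∑ f : Fin k → (∀ i, A i),
            histProb σ h (List.ofFn (Fin.cons a f)) * (∑ t, g ((Fin.cons a f : Fin (k+1) → (∀ i, A i)) t))
          = ∑ f : Fin k → (∀ i, A i),
            (∏ j, σ j h (a j)) * (histProb σ (h ++ [a]) (List.ofFn f) * (g a + ∑ t, g (f t))) := by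
            apply Finset.sum_congr rfl
            intro f _
            rw [hof f]
            have h1 : histProb σ h (a :: List.ofFn f)
                = (∏ j, σ j h (a j)) * histProb σ (h ++ [a]) (List.ofFn f) := rfl
            have h2 : (∑ t : Fin (k+1), g ((Fin.cons a f : Fin (k+1) → (∀ i, A i)) t)) = g a + ∑ t : Fin k, g (f t) := by
              rw [Fin.sum_univ_succ]
              simp
            rw [h1, h2]
            ring
        _ = (∏ j, σ j h (a j)) * (g a + cumV σ g k (h ++ [a])) := by
            rw [← Finset.mul_sum]
            congr 1
            have : ∑ f : Fin k → (∀ i, A i),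
                histProb σ (h ++ [a]) (List.ofFn f) * (g a + ∑ t, g (f t))
                = (∑ f : Fin k → (∀ i, A i), histProb σ (h ++ [a]) (List.ofFn f) * g a)
                  + ∑ f : Fin k → (∀ i, A i), histProb σ (h ++ [a]) (List.ofFn f) * (∑ t, g (f t)) := by
              rw [← Finset.sum_add_distrib]
              apply Finset.sum_congr rfl
              intro f _
              ring
            rw [this, ih (h ++ [a]), ← Finset.sum_mul, sum_histProb σ hσ k (h ++ [a]), one_mul]

lemma avgPay_eq_cumV (n : ℕ) (u : N → (∀ i, A i) → ℝ) (i : N)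
    (σ : ∀ i, List (∀ j, A j) → A i → ℝ) (hσ : ∀ i h, IsMixed (σ i h)) :
    avgPay n u i σ = cumV σ (u i) n [] / n := by
  unfold avgPay
  rw [← cumV_eq_sum σ hσ (u i) n [], Finset.sum_div]
  apply Finset.sum_congr rfl
  intro f _
  ring

end FolkAux2
section FolkAux3

set_option linter.unusedSectionVars false
set_option maxHeartbeats 1000000

open Finset

variable {N : Type} [Fintype N] [DecidableEq N] {A : N → Type}
  [∀ i, Fintype (A i)] [∀ i, DecidableEq (A i)] [∀ i, Nonempty (A i)]

/-- First deviator between a realized profile and a prescribed one. -/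
noncomputable def dev1 (x y : ∀ i, A i) : Option N :=
  if h : ∃ j, x j ≠ y j then some (Classical.choose h) else none

lemma dev1_self (y : ∀ i, A i) : dev1 y y = none := by
  unfold dev1
  rw [dif_neg]
  push_neg
  intro j
  rfl

lemma dev1_unique (x y : ∀ i, A i) (i : N) (hother : ∀ j, j ≠ i → x j = y j)
    (hi : x i ≠ y i) : dev1 x y = some i := by
  unfold dev1
  have hex : ∃ j, x j ≠ y j := ⟨i, hi⟩
  rw [dif_pos hex]
  congr 1
  by_contra hne
  exact Classical.choose_spec hex (hother _ hne)

/-- Punishment mode: the first deviator (if any) during the deterministic phase. -/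
noncomputable def modeA (path : ℕ → ∀ i, A i) (plen : ℕ) : ℕ → List (∀ i, A i) → Option N
  | _, [] => none
  | t, x :: rest =>
      if t < plen then
        match dev1 x (path t) with
        | some d => some d
        | none => modeA path plen (t+1) rest
      else none

lemma modeA_append_some (path : ℕ → ∀ i, A i) (plen : ℕ) :
    ∀ (h : List (∀ i, A i)) (t : ℕ) (d : N) (l : List (∀ i, A i)),
      modeA path plen t h = some d → modeA path plen t (h ++ l) = some d := by
  intro h
  induction h with
  | nil => intro t d l hm; simp [modeA] at hm
  | cons x rest ih =>
      intro t d l hm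
      rw [List.cons_append]
      unfold modeA at hm ⊢
      by_cases ht : t < plen
      · rw [if_pos ht] at hm ⊢
        cases hd : dev1 x (path t) with
        | some d' => rw [hd] at hm; simpa [hd] using hm
        | none => rw [hd] at hm; simpa [hd] using ih (t+1) d l hm
      · rw [if_neg ht] at hm; exact absurd hm (by simp)

lemma modeA_append_one (path : ℕ → ∀ i, A i) (plen : ℕ) :
    ∀ (h : List (∀ i, A i)) (t : ℕ) (a : ∀ i, A i),
      modeA path plen t h = none →
      modeA path plen t (h ++ [a]) =
        (if t + h.length < plen then dev1 a (path (t + h.length)) else none) := by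
  intro h
  induction h with
  | nil =>
      intro t a _
      simp only [List.nil_append, List.length_nil, Nat.add_zero]
      unfold modeA
      by_cases ht : t < plen
      · rw [if_pos ht, if_pos ht]
        cases hd : dev1 a (path t) <;> simp [hd, modeA]
      · rw [if_neg ht, if_neg ht]
  | cons x rest ih =>
      intro t a hm
      rw [List.cons_append]
      unfold modeA at hm ⊢
      by_cases ht : t < plen
      · rw [if_pos ht] at hm ⊢
        cases hd : dev1 x (path t) with
        | some d' => rw [hd] at hm; exact absurd hm (by simp)
        | none =>
            rw [hd] at hm
            simp only at hm ⊢
            rw [ih (t+1) a hm]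
            have : t + 1 + rest.length = t + (x :: rest).length := by
              simp [List.length_cons]; omega
            rw [this]
      · rw [if_neg ht] at hm ⊢
        have : ¬ t + (x :: rest).length < plen := by omega
        rw [if_neg this]

/-- The constructed equilibrium strategy profile. -/
noncomputable def combStrat (path : ℕ → ∀ i, A i) (plen : ℕ)
    (nash : ℕ → ∀ j, A j → ℝ) (pun : N → ∀ j, A j → ℝ) (dflt : ∀ j, A j) :
    ∀ i, List (∀ j, A j) → A i → ℝ :=
  fun i h =>
    match modeA path plen 0 h with
    | some d => if i = d then pureS (dflt i) else pun d i
    | none => if h.length < plen then pureS (path h.length i) else nash h.length i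

lemma combStrat_mixed (path : ℕ → ∀ i, A i) (plen : ℕ)
    (nash : ℕ → ∀ j, A j → ℝ) (pun : N → ∀ j, A j → ℝ) (dflt : ∀ j, A j)
    (hnash : ∀ s j, IsMixed (nash s j)) (hpun : ∀ d j, IsMixed (pun d j)) :
    ∀ i h, IsMixed (combStrat path plen nash pun dflt i h) := by
  intro i h
  unfold combStrat
  cases modeA path plen 0 h with
  | some d =>
      simp only
      split
      · exact pureS_isMixed _
      · exact hpun d i
  | none =>
      simp only
      split
      · exact pureS_isMixed _
      · exact hnash _ i

lemma factor_pos {F : N → ℝ} (hnn : ∀ j, 0 ≤ F j) (hpos : 0 < ∏ j, F j) (j : N) :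
    0 < F j := by
  rcases lt_or_eq_of_le (hnn j) with h | h
  · exact h
  · exfalso
    have : (∏ j, F j) = 0 := Finset.prod_eq_zero (Finset.mem_univ j) h.symm
    rw [this] at hpos
    exact lt_irrefl 0 hpos

lemma pureS_pos_eq {α : Type} [Fintype α] [DecidableEq α] {x y : α}
    (h : 0 < pureS x y) : y = x := by
  by_contra hne
  simp [pureS, hne] at h

lemma cumV_succ_le_expU (σ' : ∀ i, List (∀ j, A j) → A i → ℝ)
    (hσ' : ∀ j h, IsMixed (σ' j h)) (g : (∀ i, A i) → ℝ) (k : ℕ) (h : List (∀ i, A i)) (C : ℝ)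
    (hcont : ∀ a : ∀ i, A i, 0 < ∏ j, σ' j h (a j) → cumV σ' g k (h ++ [a]) ≤ C) :
    cumV σ' g (k+1) h ≤ expU g (fun j => σ' j h) + C := by
  show ∑ a : ∀ i, A i, (∏ j, σ' j h (a j)) * (g a + cumV σ' g k (h ++ [a])) ≤ _
  have step : ∀ a : ∀ i, A i, (∏ j, σ' j h (a j)) * (g a + cumV σ' g k (h ++ [a]))
      ≤ (∏ j, σ' j h (a j)) * (g a + C) := by
    intro a
    rcases lt_or_eq_of_le (prod_pi_nonneg _ (fun j => hσ' j h) a) with hw | hw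
    · exact mul_le_mul_of_nonneg_left (by linarith [hcont a hw]) (le_of_lt hw)
    · rw [← hw]; simp
  calc ∑ a : ∀ i, A i, (∏ j, σ' j h (a j)) * (g a + cumV σ' g k (h ++ [a]))
      ≤ ∑ a : ∀ i, A i, (∏ j, σ' j h (a j)) * (g a + C) := Finset.sum_le_sum (fun a _ => step a)
    _ = (∑ a : ∀ i, A i, (∏ j, σ' j h (a j)) * g a)
        + (∑ a : ∀ i, A i, (∏ j, σ' j h (a j))) * C := by
        rw [Finset.sum_mul, ← Finset.sum_add_distrib]
        apply Finset.sum_congr rfl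
        intro a _
        ring
    _ = expU g (fun j => σ' j h) + C := by
        rw [sum_prod_pi_one _ (fun j => hσ' j h), one_mul]
        rfl

lemma cumV_succ_le_const (σ' : ∀ i, List (∀ j, A j) → A i → ℝ)
    (hσ' : ∀ j h, IsMixed (σ' j h)) (g : (∀ i, A i) → ℝ) (k : ℕ) (h : List (∀ i, A i)) (B : ℝ)
    (hterm : ∀ a : ∀ i, A i, 0 < ∏ j, σ' j h (a j) →
      g a + cumV σ' g k (h ++ [a]) ≤ B) :
    cumV σ' g (k+1) h ≤ B := by
  show ∑ a : ∀ i, A i, (∏ j, σ' j h (a j)) * (g a + cumV σ' g k (h ++ [a])) ≤ _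
  have step : ∀ a : ∀ i, A i, (∏ j, σ' j h (a j)) * (g a + cumV σ' g k (h ++ [a]))
      ≤ (∏ j, σ' j h (a j)) * B := by
    intro a
    rcases lt_or_eq_of_le (prod_pi_nonneg _ (fun j => hσ' j h) a) with hw | hw
    · exact mul_le_mul_of_nonneg_left (hterm a hw) (le_of_lt hw)
    · rw [← hw]; simp
  calc ∑ a : ∀ i, A i, (∏ j, σ' j h (a j)) * (g a + cumV σ' g k (h ++ [a]))
      ≤ ∑ a : ∀ i, A i, (∏ j, σ' j h (a j)) * B := Finset.sum_le_sum (fun a _ => step a)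
    _ = B := by rw [← Finset.sum_mul, sum_prod_pi_one _ (fun j => hσ' j h), one_mul]

lemma cumV_succ_eq_const (σ' : ∀ i, List (∀ j, A j) → A i → ℝ)
    (hσ' : ∀ j h, IsMixed (σ' j h)) (g : (∀ i, A i) → ℝ) (k : ℕ) (h : List (∀ i, A i)) (C : ℝ)
    (hcont : ∀ a : ∀ i, A i, 0 < ∏ j, σ' j h (a j) → cumV σ' g k (h ++ [a]) = C) :
    cumV σ' g (k+1) h = expU g (fun j => σ' j h) + C := by
  show ∑ a : ∀ i, A i, (∏ j, σ' j h (a j)) * (g a + cumV σ' g k (h ++ [a])) = _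
  have step : ∀ a : ∀ i, A i, (∏ j, σ' j h (a j)) * (g a + cumV σ' g k (h ++ [a]))
      = (∏ j, σ' j h (a j)) * (g a + C) := by
    intro a
    rcases lt_or_eq_of_le (prod_pi_nonneg _ (fun j => hσ' j h) a) with hw | hw
    · rw [hcont a hw]
    · rw [← hw]; ring
  calc ∑ a : ∀ i, A i, (∏ j, σ' j h (a j)) * (g a + cumV σ' g k (h ++ [a]))
      = ∑ a : ∀ i, A i, (∏ j, σ' j h (a j)) * (g a + C) := Finset.sum_congr rfl (fun a _ => step a)
    _ = (∑ a : ∀ i, A i, (∏ j, σ' j h (a j)) * g a)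
        + (∑ a : ∀ i, A i, (∏ j, σ' j h (a j))) * C := by
        rw [Finset.sum_mul, ← Finset.sum_add_distrib]
        apply Finset.sum_congr rfl
        intro a _
        ring
    _ = expU g (fun j => σ' j h) + C := by
        rw [sum_prod_pi_one _ (fun j => hσ' j h), one_mul]
        rfl

lemma cumV_succ_pure (σ' : ∀ i, List (∀ j, A j) → A i → ℝ)
    (g : (∀ i, A i) → ℝ) (k : ℕ) (h : List (∀ i, A i)) (y : ∀ i, A i)
    (hy : ∀ j, σ' j h = pureS (y j)) :
    cumV σ' g (k+1) h = g y + cumV σ' g k (h ++ [y]) := by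
  show ∑ a : ∀ i, A i, (∏ j, σ' j h (a j)) * (g a + cumV σ' g k (h ++ [a])) = _
  have : ∀ a : ∀ i, A i, (∏ j, σ' j h (a j)) = ∏ j, pureS (y j) (a j) := by
    intro a
    exact Finset.prod_congr rfl (fun j _ => by rw [hy j])
  rw [Finset.sum_congr rfl (fun a _ => by rw [this a])]
  exact sum_pure_collapse y (fun a => g a + cumV σ' g k (h ++ [a]))

end FolkAux3
section FolkAux4

set_option linter.unusedSectionVars false
set_option maxHeartbeats 1000000

open Finset

variable {N : Type} [Fintype N] [DecidableEq N] {A : N → Type}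
  [∀ i, Fintype (A i)] [∀ i, DecidableEq (A i)] [∀ i, Nonempty (A i)]

lemma update_strat_mixed (σ : ∀ i, List (∀ j, A j) → A i → ℝ)
    (hσ : ∀ j h, IsMixed (σ j h)) (i : N) (τ : List (∀ j, A j) → A i → ℝ)
    (hτ : ∀ h, IsMixed (τ h)) :
    ∀ j h, IsMixed (Function.update σ i τ j h) := by
  intro j h
  by_cases hji : j = i
  · subst hji; rw [Function.update_self]; exact hτ h
  · rw [Function.update_of_ne hji]; exact hσ j h

section Main

variable (path : ℕ → ∀ i, A i) (plen : ℕ) (nash : ℕ → ∀ j, A j → ℝ)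
  (pun : N → ∀ j, A j → ℝ) (dflt : ∀ j, A j)
  (u : N → (∀ i, A i) → ℝ) (i : N) (τ : List (∀ j, A j) → A i → ℝ)

lemma pun_bound (vi : ℝ)
    (hσ' : ∀ j h, IsMixed (Function.update (combStrat path plen nash pun dflt) i τ j h))
    (hτ : ∀ h, IsMixed (τ h))
    (hpun_i : ∀ ρ : A i → ℝ, IsMixed ρ → expU (u i) (Function.update (pun i) i ρ) ≤ vi) :
    ∀ (k : ℕ) (h : List (∀ i, A i)), modeA path plen 0 h = some i →
      cumV (Function.update (combStrat path plen nash pun dflt) i τ) (u i) k h ≤ k * vi := by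
  intro k
  induction k with
  | zero => intro h _; simp [cumV]
  | succ k ih =>
      intro h hm
      set σ' := Function.update (combStrat path plen nash pun dflt) i τ with hσ'def
      have hcont : ∀ a : ∀ i, A i, 0 < ∏ j, σ' j h (a j) →
          cumV σ' (u i) k (h ++ [a]) ≤ k * vi := by
        intro a _
        exact ih (h ++ [a]) (modeA_append_some path plen h 0 i [a] hm)
      have hstep := cumV_succ_le_expU σ' hσ' (u i) k h (k * vi) hcont
      have hE : expU (u i) (fun j => σ' j h) = expU (u i) (Function.update (pun i) i (τ h)) := by
        apply expU_congr
        intro j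
        by_cases hji : j = i
        · subst hji
          rw [hσ'def, Function.update_self, Function.update_self]
        · rw [hσ'def, Function.update_of_ne hji, Function.update_of_ne hji]
          show combStrat path plen nash pun dflt j h = pun i j
          unfold combStrat
          rw [hm]
          simp [hji]
      rw [hE] at hstep
      have := hpun_i (τ h) (hτ h)
      push_cast
      linarith

lemma mix_phase_bound (E : ℕ → ℝ)
    (hσ' : ∀ j h, IsMixed (Function.update (combStrat path plen nash pun dflt) i τ j h))
    (hτ : ∀ h, IsMixed (τ h))
    (hnash_i : ∀ s, plen ≤ s → ∀ ρ : A i → ℝ, IsMixed ρ →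
      expU (u i) (Function.update (nash s) i ρ) ≤ E s) :
    ∀ (k : ℕ) (h : List (∀ i, A i)), modeA path plen 0 h = none → plen ≤ h.length →
      cumV (Function.update (combStrat path plen nash pun dflt) i τ) (u i) k h
        ≤ ∑ t ∈ Finset.range k, E (h.length + t) := by
  intro k
  induction k with
  | zero => intro h _ _; simp [cumV]
  | succ k ih =>
      intro h hm hlen
      set σ' := Function.update (combStrat path plen nash pun dflt) i τ with hσ'def
      have hmode' : ∀ a : ∀ i, A i, modeA path plen 0 (h ++ [a]) = none := by
        intro a
        rw [modeA_append_one path plen h 0 a hm]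
        rw [if_neg (by omega)]
      have hcont : ∀ a : ∀ i, A i, 0 < ∏ j, σ' j h (a j) →
          cumV σ' (u i) k (h ++ [a]) ≤ ∑ t ∈ Finset.range k, E (h.length + 1 + t) := by
        intro a _
        have := ih (h ++ [a]) (hmode' a) (by simp; omega)
        simpa using this
      have hstep := cumV_succ_le_expU σ' hσ' (u i) k h _ hcont
      have hE : expU (u i) (fun j => σ' j h)
          = expU (u i) (Function.update (nash h.length) i (τ h)) := by
        apply expU_congr
        intro j
        by_cases hji : j = i
        · subst hji
          rw [hσ'def, Function.update_self, Function.update_self]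
        · rw [hσ'def, Function.update_of_ne hji, Function.update_of_ne hji]
          show combStrat path plen nash pun dflt j h = nash h.length j
          unfold combStrat
          rw [hm]
          simp [Nat.not_lt.mpr hlen]
      rw [hE] at hstep
      have hsum : ∑ t ∈ Finset.range (k+1), E (h.length + t)
          = (∑ t ∈ Finset.range k, E (h.length + 1 + t)) + E h.length := by
        rw [Finset.sum_range_succ']
        simp only [Nat.add_zero]
        congr 1
        apply Finset.sum_congr rfl
        intro t _
        congr 1
        omega
      rw [hsum]
      have := hnash_i h.length hlen (τ h) (hτ h)
      linarith

lemma mix_phase_eq (E : ℕ → ℝ)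
    (hcomb : ∀ j h, IsMixed (combStrat path plen nash pun dflt j h))
    (hnash_e : ∀ s, plen ≤ s → expU (u i) (nash s) = E s) :
    ∀ (k : ℕ) (h : List (∀ i, A i)), modeA path plen 0 h = none → plen ≤ h.length →
      cumV (combStrat path plen nash pun dflt) (u i) k h
        = ∑ t ∈ Finset.range k, E (h.length + t) := by
  intro k
  induction k with
  | zero => intro h _ _; simp [cumV]
  | succ k ih =>
      intro h hm hlen
      have hmode' : ∀ a : ∀ i, A i, modeA path plen 0 (h ++ [a]) = none := by
        intro a
        rw [modeA_append_one path plen h 0 a hm]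
        rw [if_neg (by omega)]
      have hcont : ∀ a : ∀ i, A i, 0 < ∏ j, combStrat path plen nash pun dflt j h (a j) →
          cumV (combStrat path plen nash pun dflt) (u i) k (h ++ [a])
            = ∑ t ∈ Finset.range k, E (h.length + 1 + t) := by
        intro a _
        have := ih (h ++ [a]) (hmode' a) (by simp; omega)
        simpa using this
      have hstep := cumV_succ_eq_const (combStrat path plen nash pun dflt) hcomb (u i) k h _ hcont
      have hE : expU (u i) (fun j => combStrat path plen nash pun dflt j h)
          = expU (u i) (nash h.length) := by
        apply expU_congr
        intro j
        show combStrat path plen nash pun dflt j h = nash h.length j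
        unfold combStrat
        rw [hm]
        simp [Nat.not_lt.mpr hlen]
      rw [hE, hnash_e h.length hlen] at hstep
      have hsum : ∑ t ∈ Finset.range (k+1), E (h.length + t)
          = (∑ t ∈ Finset.range k, E (h.length + 1 + t)) + E h.length := by
        rw [Finset.sum_range_succ']
        simp only [Nat.add_zero]
        congr 1
        apply Finset.sum_congr rfl
        intro t _
        congr 1
        omega
      rw [hsum, hstep]
      ring

end Main

end FolkAux4
section FolkAux5

set_option linter.unusedSectionVars false
set_option maxHeartbeats 1000000

open Finset

variable {N : Type} [Fintype N] [DecidableEq N] {A : N → Type}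
  [∀ i, Fintype (A i)] [∀ i, DecidableEq (A i)] [∀ i, Nonempty (A i)]

variable (path : ℕ → ∀ i, A i) (plen : ℕ) (nash : ℕ → ∀ j, A j → ℝ)
  (pun : N → ∀ j, A j → ℝ) (dflt : ∀ j, A j)
  (u : N → (∀ i, A i) → ℝ) (i : N) (τ : List (∀ j, A j) → A i → ℝ)

lemma pure_phase_bound (n : ℕ) (E : ℕ → ℝ) (vi Mbd : ℝ)
    (hplen : plen ≤ n)
    (hσ' : ∀ j h, IsMixed (Function.update (combStrat path plen nash pun dflt) i τ j h))
    (hτ : ∀ h, IsMixed (τ h))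
    (hpun_i : ∀ ρ : A i → ℝ, IsMixed ρ → expU (u i) (Function.update (pun i) i ρ) ≤ vi)
    (hnash_i : ∀ s, plen ≤ s → ∀ ρ : A i → ℝ, IsMixed ρ →
      expU (u i) (Function.update (nash s) i ρ) ≤ E s)
    (hMa : ∀ a, u i a ≤ Mbd)
    (hD : ∀ s k', s + (k' + 1) = n → s < plen →
      Mbd + k' * vi ≤ (∑ r ∈ Finset.Ico s plen, u i (path r)) + ∑ r ∈ Finset.Ico plen n, E r) :
    ∀ (k : ℕ) (h : List (∀ i, A i)), modeA path plen 0 h = none →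
      h.length + k = n → h.length ≤ plen →
      cumV (Function.update (combStrat path plen nash pun dflt) i τ) (u i) k h
        ≤ (∑ r ∈ Finset.Ico h.length plen, u i (path r)) + ∑ r ∈ Finset.Ico plen n, E r := by
  intro k
  induction k with
  | zero =>
      intro h hm hlen hle
      have h1 : h.length = plen := by omega
      have h2 : plen = n := by omega
      simp [cumV, h1, h2]
  | succ k ih =>
      intro h hm hlen hle
      set σ' := Function.update (combStrat path plen nash pun dflt) i τ with hσ'def
      by_cases hsp : h.length = plen
      · -- mixed phase from here on
        have hb := mix_phase_bound path plen nash pun dflt u i τ E hσ' hτ hnash_i (k+1) h hm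
          (le_of_eq hsp.symm)
        rw [hsp] at hb ⊢
        simp only [Finset.Ico_self, Finset.sum_empty, zero_add]
        rw [Finset.sum_Ico_eq_sum_range]
        have hnp : n - plen = k + 1 := by omega
        rw [hnp]
        exact hb
      · have hlt : h.length < plen := lt_of_le_of_ne hle hsp
        apply cumV_succ_le_const σ' hσ' (u i) k h _
        intro a hw
        have hfac : ∀ j, 0 < σ' j h (a j) :=
          factor_pos (fun j => (hσ' j h).1 (a j)) hw
        have hoth : ∀ j, j ≠ i → a j = path h.length j := by
          intro j hji
          have : σ' j h = pureS (path h.length j) := by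
            rw [hσ'def, Function.update_of_ne hji]
            show combStrat path plen nash pun dflt j h = _
            unfold combStrat
            rw [hm]
            simp [hlt]
          exact pureS_pos_eq (by rw [← this]; exact hfac j)
        by_cases hai : a i = path h.length i
        · -- compliant action
          have hay : a = path h.length := by
            funext j
            by_cases hji : j = i
            · subst hji; exact hai
            · exact hoth j hji
          have hm' : modeA path plen 0 (h ++ [a]) = none := by
            rw [modeA_append_one path plen h 0 a hm, if_pos (by omega)]
            rw [Nat.zero_add, hay]
            exact dev1_self _
          have hih := ih (h ++ [a]) hm' (by simp; omega) (by simp; omega)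
          have hlen' : (h ++ [a]).length = h.length + 1 := by simp
          rw [hlen'] at hih
          have hpeel : (∑ r ∈ Finset.Ico h.length plen, u i (path r))
              = u i (path h.length) + ∑ r ∈ Finset.Ico (h.length + 1) plen, u i (path r) :=
            Finset.sum_eq_sum_Ico_succ_bot hlt _
          rw [hay] at hih
          rw [hpeel, hay]
          linarith
        · -- player i deviates
          have hm' : modeA path plen 0 (h ++ [a]) = some i := by
            rw [modeA_append_one path plen h 0 a hm, if_pos (by omega)]
            rw [Nat.zero_add]
            exact dev1_unique a (path h.length) i hoth hai
          have hpb := pun_bound path plen nash pun dflt u i τ vi hσ' hτ hpun_i k (h ++ [a]) hm'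
          have hDs := hD h.length k (by omega) hlt
          have := hMa a
          linarith

lemma pure_phase_eq (n : ℕ) (E : ℕ → ℝ)
    (hplen : plen ≤ n)
    (hcomb : ∀ j h, IsMixed (combStrat path plen nash pun dflt j h))
    (hnash_e : ∀ s, plen ≤ s → expU (u i) (nash s) = E s) :
    ∀ (k : ℕ) (h : List (∀ i, A i)), modeA path plen 0 h = none →
      h.length + k = n → h.length ≤ plen →
      cumV (combStrat path plen nash pun dflt) (u i) k h
        = (∑ r ∈ Finset.Ico h.length plen, u i (path r)) + ∑ r ∈ Finset.Ico plen n, E r := by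
  intro k
  induction k with
  | zero =>
      intro h hm hlen hle
      have h1 : h.length = plen := by omega
      have h2 : plen = n := by omega
      simp [cumV, h1, h2]
  | succ k ih =>
      intro h hm hlen hle
      by_cases hsp : h.length = plen
      · have hb := mix_phase_eq path plen nash pun dflt u i E hcomb hnash_e (k+1) h hm
          (le_of_eq hsp.symm)
        rw [hsp] at hb ⊢
        simp only [Finset.Ico_self, Finset.sum_empty, zero_add]
        rw [Finset.sum_Ico_eq_sum_range]
        have hnp : n - plen = k + 1 := by omega
        rw [hnp]
        exact hb
      · have hlt : h.length < plen := lt_of_le_of_ne hle hsp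
        have hy : ∀ j, combStrat path plen nash pun dflt j h = pureS (path h.length j) := by
          intro j
          unfold combStrat
          rw [hm]
          simp [hlt]
        rw [cumV_succ_pure (combStrat path plen nash pun dflt) (u i) k h (path h.length) hy]
        have hm' : modeA path plen 0 (h ++ [path h.length]) = none := by
          rw [modeA_append_one path plen h 0 _ hm, if_pos (by omega)]
          rw [Nat.zero_add]
          exact dev1_self _
        have hih := ih (h ++ [path h.length]) hm' (by simp; omega) (by simp; omega)
        have hlen' : (h ++ [path h.length]).length = h.length + 1 := by simp
        rw [hlen'] at hih
        rw [hih]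
        have hpeel : (∑ r ∈ Finset.Ico h.length plen, u i (path r))
            = u i (path h.length) + ∑ r ∈ Finset.Ico (h.length + 1) plen, u i (path r) :=
          Finset.sum_eq_sum_Ico_succ_bot hlt _
        rw [hpeel]
        ring

lemma comb_onpath
    (hcomb : ∀ j h, IsMixed (combStrat path plen nash pun dflt j h)) :
    ∀ (l h : List (∀ i, A i)), modeA path plen 0 h = none →
      0 < histProb (combStrat path plen nash pun dflt) h l →
      ∀ t, modeA path plen 0 (h ++ l.take t) = none := by
  intro l
  induction l with
  | nil =>
      intro h hm _ t
      simp only [List.take_nil, List.append_nil]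
      exact hm
  | cons a rest ih =>
      intro h hm hpos t
      have hsplit : histProb (combStrat path plen nash pun dflt) h (a :: rest)
          = (∏ j, combStrat path plen nash pun dflt j h (a j))
            * histProb (combStrat path plen nash pun dflt) (h ++ [a]) rest := rfl
      rw [hsplit] at hpos
      have hw : 0 < ∏ j, combStrat path plen nash pun dflt j h (a j) := by
        rcases mul_pos_iff.mp hpos with ⟨h1, _⟩ | ⟨h1, _⟩
        · exact h1
        · exact absurd h1 (not_lt.mpr (prod_pi_nonneg _ (fun j => hcomb j h) a))
      have hrest : 0 < histProb (combStrat path plen nash pun dflt) (h ++ [a]) rest := by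
        rcases mul_pos_iff.mp hpos with ⟨_, h2⟩ | ⟨h1, _⟩
        · exact h2
        · exact absurd h1 (not_lt.mpr (prod_pi_nonneg _ (fun j => hcomb j h) a))
      have hm' : modeA path plen 0 (h ++ [a]) = none := by
        rw [modeA_append_one path plen h 0 a hm]
        by_cases hlt : h.length < plen
        · rw [if_pos (by omega)]
          have : ∀ j, a j = path h.length j := by
            intro j
            have hfac := factor_pos (fun j => (hcomb j h).1 (a j)) hw j
            have hj : combStrat path plen nash pun dflt j h = pureS (path h.length j) := by
              unfold combStrat
              rw [hm]
              simp [hlt]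
            rw [hj] at hfac
            exact pureS_pos_eq hfac
          have : a = path h.length := funext this
          rw [Nat.zero_add, this]
          exact dev1_self _
        · rw [if_neg (by omega)]
      cases t with
      | zero =>
          simp only [List.take_zero, List.append_nil]
          exact hm
      | succ t =>
          have : h ++ (a :: rest).take (t+1) = (h ++ [a]) ++ rest.take t := by
            simp [List.take_succ_cons]
          rw [this]
          exact ih (h ++ [a]) hm' hrest t

end FolkAux5
section FolkAux6

set_option linter.unusedSectionVars false
set_option maxHeartbeats 1000000

open Finset

lemma rat_scale (q : ℚ) (hq : 0 ≤ q) (K : ℕ) (hd : q.den ∣ K) :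
    ((q.num.toNat * (K / q.den) : ℕ) : ℚ) = q * K := by
  have h1 : (q.num.toNat : ℚ) = (q.num : ℚ) := by
    norm_cast
    exact Int.toNat_of_nonneg (Rat.num_nonneg.mpr hq)
  push_cast [h1]
  obtain ⟨c, hc⟩ := hd
  rw [hc]
  rw [Nat.mul_div_cancel_left c q.den_pos]
  push_cast
  rw [← mul_assoc]
  congr 1
  exact_mod_cast (Rat.mul_den_eq_num q).symm

lemma sum_range_getD {P : Type} (l : List P) (d : P) (g : P → ℝ) :
    ∑ r ∈ Finset.range l.length, g (l.getD r d) = (l.map g).sum := by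
  induction l with
  | nil => simp
  | cons x xs ih =>
      rw [List.length_cons, Finset.sum_range_succ']
      simp only [List.getD_cons_succ, List.getD_cons_zero, List.map_cons, List.sum_cons]
      rw [ih]
      ring

lemma mult_card {P : Type} [Fintype P] [DecidableEq P] (k : P → ℕ) :
    Multiset.card (∑ a : P, Multiset.replicate (k a) a) = ∑ a : P, k a := by
  rw [Multiset.card_sum]
  simp

lemma mult_map_sum {P : Type} [DecidableEq P] (s : Finset P) (k : P → ℕ) (g : P → ℝ) :
    (Multiset.map g (∑ a ∈ s, Multiset.replicate (k a) a)).sum = ∑ a ∈ s, (k a : ℝ) * g a := by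
  induction s using Finset.cons_induction with
  | empty => simp
  | cons x s hx ih =>
      rw [Finset.sum_cons, Finset.sum_cons, Multiset.map_add, Multiset.sum_add, ih]
      simp [Multiset.map_replicate, Multiset.sum_replicate, nsmul_eq_mul]

lemma mult_toList_map_sum {P : Type} [Fintype P] [DecidableEq P] (k : P → ℕ) (g : P → ℝ) :
    (((Finset.univ.sum fun a : P => Multiset.replicate (k a) a).toList.map g)).sum
      = ∑ a : P, (k a : ℝ) * g a := by
  have h1 : (((Finset.univ.sum fun a : P => Multiset.replicate (k a) a).toList.map g)).sum
      = (((Finset.univ.sum fun a : P => Multiset.replicate (k a) a).map g)).sum := by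
    conv_rhs => rw [← Multiset.coe_toList (Finset.univ.sum fun a : P => Multiset.replicate (k a) a)]
    rw [Multiset.map_coe, Multiset.sum_coe]
  rw [h1, mult_map_sum]

variable {N : Type} [Fintype N] [DecidableEq N] {A : N → Type}
  [∀ i, Fintype (A i)] [∀ i, DecidableEq (A i)] [∀ i, Nonempty (A i)]

lemma update_mixed1 (σ : ∀ j, A j → ℝ) (hσ : ∀ j, IsMixed (σ j)) (i : N)
    (ρ : A i → ℝ) (hρ : IsMixed ρ) : ∀ j, IsMixed (Function.update σ i ρ j) := by
  intro j
  by_cases hji : j = i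
  · subst hji; rw [Function.update_self]; exact hρ
  · rw [Function.update_of_ne hji]; exact hσ j

lemma nash_ge_minmax (u : N → (∀ i, A i) → ℝ) (v : N → ℝ) (i : N)
    (hv : IsMinmaxVal u i (v i)) (σN : ∀ j, A j → ℝ) (hN : IsNash u σN) :
    v i ≤ expU (u i) σN := by
  have h1 : v i ≤ Finset.univ.sup' Finset.univ_nonempty
      (fun a : A i => expU (u i) (Function.update σN i (pureS a))) :=
    hv.2 ⟨σN, hN.1, rfl⟩
  have h2 : Finset.univ.sup' Finset.univ_nonempty
      (fun a : A i => expU (u i) (Function.update σN i (pureS a))) ≤ expU (u i) σN :=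
    Finset.sup'_le _ _ (fun a _ => hN.2 i (pureS a) (pureS_isMixed a))
  linarith

lemma minmax_abs_le (u : N → (∀ i, A i) → ℝ) (v : N → ℝ) (i : N)
    (hv : IsMinmaxVal u i (v i)) (M : ℝ) (hM : ∀ j a, |u j a| ≤ M) : |v i| ≤ M := by
  obtain ⟨π, hπ, hπeq⟩ := hv.1
  obtain ⟨a0, -, ha0⟩ := Finset.exists_mem_eq_sup' Finset.univ_nonempty
    (fun a : A i => expU (u i) (Function.update π i (pureS a)))
  rw [hπeq, ha0]
  exact expU_abs_le (u i) _ (update_mixed1 π hπ i (pureS a0) (pureS_isMixed a0)) M (hM i)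

lemma pun_exists (u : N → (∀ i, A i) → ℝ) (v : N → ℝ) (i : N)
    (hv : IsMinmaxVal u i (v i)) :
    ∃ π : ∀ j, A j → ℝ, (∀ j, IsMixed (π j)) ∧
      ∀ ρ : A i → ℝ, IsMixed ρ → expU (u i) (Function.update π i ρ) ≤ v i := by
  obtain ⟨π, hπ, hπeq⟩ := hv.1
  refine ⟨π, hπ, fun ρ hρ => ?_⟩
  rw [hπeq]
  exact expU_update_le_sup (u i) π i ρ hρ

end FolkAux6
set_option maxHeartbeats 3000000 in
theorem stmt_17 (u : N → (∀ i, A i) → ℝ) (v : N → ℝ)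
    (hv : ∀ i, IsMinmaxVal u i (v i))
    -- for every player there is a stage Nash equilibrium strictly above his minmax payoff
    (hNE : ∀ i, ∃ σ, IsNash u σ ∧ v i < expU (u i) σ)
    -- a feasible and individually rational payoff profile p
    (p : N → ℝ) (α : (∀ i, A i) → ℚ)
    (hα0 : ∀ a, 0 ≤ α a) (hα1 : ∑ a, α a = 1)
    (hfeas : ∀ i, p i = ∑ a, (α a : ℝ) * u i a)
    (hIR : ∀ i, v i ≤ p i)
    -- βᵢ bounds the entropy of player i's strategy in any stage Nash equilibrium
    (β : N → ℝ) (hβ : ∀ i σ, IsNash u σ → ent (σ i) ≤ β i) :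
    ∃ c : ℕ, ∃ n₀ : ℕ, ∀ n, n₀ ≤ n →
      ∃ σ : ∀ i, List (∀ j, A j) → A i → ℝ, IsRepNash n u σ ∧
        -- along every on-path terminal history, each player mixes in at most c stages
        (∀ i, ∀ f : Fin n → (∀ i, A i), 0 < histProb σ [] (List.ofFn f) →
          {t : Fin n | ¬ ∃ a : A i, σ i ((List.ofFn f).take t) = pureS a}.ncard ≤ c) ∧
        -- in particular the effective entropy of player i's strategy is at most c·βᵢ
        (∀ i, effEnt n σ i ≤ (c : ℝ) * β i) := by
  classical
  cases isEmpty_or_nonempty N with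
  | inl hNe =>
      exact ⟨0, 0, fun n _ =>
        ⟨fun i => isEmptyElim i, ⟨fun i => isEmptyElim i, fun i => isEmptyElim i⟩,
          fun i => isEmptyElim i, fun i => isEmptyElim i⟩⟩
  | inr hNne =>
  choose NEσ hNEnash hNEgt using hNE
  choose pun hpunMix hpunLe using fun i => pun_exists u v i (hv i)
  have hNc : 0 < Fintype.card N := Fintype.card_pos
  set Nc := Fintype.card N with hNcdef
  set e : N ≃ Fin Nc := Fintype.equivFin N with hedef
  have hPne : Nonempty (∀ i, A i) := ⟨fun i => Classical.arbitrary (A i)⟩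
  obtain ⟨i0⟩ := hNne
  haveI : Nonempty N := ⟨i0⟩
  haveI : Nonempty (N × (∀ i, A i)) := ⟨(i0, fun i => Classical.arbitrary (A i))⟩
  set M' : ℝ := Finset.univ.sup' (Finset.univ_nonempty)
    (fun x : N × (∀ i, A i) => |u x.1 x.2|) with hM'def
  have hM : ∀ j a, |u j a| ≤ M' := fun j a =>
    Finset.le_sup' (fun x : N × (∀ i, A i) => |u x.1 x.2|) (Finset.mem_univ (j, a))
  have hM0 : 0 ≤ M' := le_trans (abs_nonneg _) (hM i0 (Classical.arbitrary _))
  have hvabs : ∀ i, |v i| ≤ M' := fun i => minmax_abs_le u v i (hv i) M' hM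
  -- gap
  obtain ⟨iming, -, hming⟩ := Finset.exists_min_image Finset.univ
    (fun i => expU (u i) (NEσ i) - v i) ⟨i0, Finset.mem_univ i0⟩
  set g := expU (u iming) (NEσ iming) - v iming with hgdef
  have hg0 : 0 < g := by have := hNEgt iming; rw [hgdef]; linarith
  have hgle : ∀ i, g ≤ expU (u i) (NEσ i) - v i := fun i => hming i (Finset.mem_univ i)
  -- rational weights
  set K := ∏ a : ∀ i, A i, (α a).den with hKdef
  have hK : 0 < K := Finset.prod_pos (fun a _ => (α a).pos)
  have hKdvd : ∀ a, (α a).den ∣ K := fun a => Finset.dvd_prod_of_mem _ (Finset.mem_univ a)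
  set kf : (∀ i, A i) → ℕ := fun a => (α a).num.toNat * (K / (α a).den) with hkfdef
  have hkQ : ∀ a, ((kf a : ℕ) : ℚ) = α a * K := fun a => rat_scale (α a) (hα0 a) K (hKdvd a)
  have hksum : ∑ a, kf a = K := by
    have hq : ((∑ a, kf a : ℕ) : ℚ) = ((K : ℕ) : ℚ) := by
      push_cast
      calc ∑ a, ((kf a : ℕ) : ℚ) = ∑ a, α a * K := Finset.sum_congr rfl (fun a _ => hkQ a)
        _ = (∑ a, α a) * K := by rw [Finset.sum_mul]
        _ = K := by rw [hα1, one_mul]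
    exact_mod_cast hq
  -- the cycle
  set l : List (∀ i, A i) := (Finset.univ.sum fun a => Multiset.replicate (kf a) a).toList
    with hldef
  have hlen : l.length = K := by rw [hldef, Multiset.length_toList, mult_card, hksum]
  set dfltP : ∀ i, A i := fun i => Classical.arbitrary (A i) with hdfltdef
  set cyc : ℕ → ∀ i, A i := fun r => l.getD r dfltP with hcycdef
  have hcycsum : ∀ i, ∑ r ∈ Finset.range K, u i (cyc r) = K * p i := by
    intro i
    have h1 : ∑ r ∈ Finset.range K, u i (cyc r) = (l.map (u i)).sum := by
      rw [← hlen]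
      exact sum_range_getD l dfltP (u i)
    have h2 : ∀ a : ∀ i, A i, ((kf a : ℕ) : ℝ) = (α a : ℝ) * K := by
      intro a
      exact_mod_cast congrArg (fun q : ℚ => (q : ℝ)) (hkQ a)
    rw [h1, hldef, mult_toList_map_sum]
    rw [Finset.sum_congr rfl (fun a _ => by rw [h2 a])]
    rw [hfeas i, Finset.mul_sum]
    apply Finset.sum_congr rfl
    intro a _
    ring
  -- phase lengths
  set L := Nat.ceil (((2 * K + 2 : ℝ) * M') / g) + 1 with hLdef
  have hL1 : 1 ≤ L := by omega
  have hLg : ((2 * K : ℝ) + 2) * M' ≤ L * g := by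
    have h1 : (((2 * K + 2 : ℝ) * M') / g) ≤ (L : ℝ) := by
      have := Nat.le_ceil (((2 * K + 2 : ℝ) * M') / g)
      have h2 : ((Nat.ceil (((2 * K + 2 : ℝ) * M') / g) : ℕ) : ℝ) ≤ (L : ℝ) := by
        rw [hLdef]; push_cast; linarith
      linarith
    calc (2 * (K:ℝ) + 2) * M' = ((((2 * K + 2 : ℝ)) * M') / g) * g := by field_simp
      _ ≤ L * g := mul_le_mul_of_nonneg_right h1 (le_of_lt hg0)
  set m := Nc * L with hmdef
  have hm1 : 1 ≤ m := by
    rw [hmdef]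
    exact Nat.one_le_iff_ne_zero.mpr (by positivity)
  refine ⟨m + K, m + K, fun n hn => ?_⟩
  set r0 := (n - m) % K with hr0def
  have hr0 : r0 < K := Nat.mod_lt _ hK
  set m' := m + r0 with hm'def
  set plen := n - m' with hplendef
  have hm'n : m' < n := by omega
  have hplm : plen + m' = n := by omega
  set q0 := (n - m) / K with hq0def
  have hdm : K * q0 + r0 = n - m := Nat.div_add_mod (n - m) K
  have hplenq : plen = K * q0 := by omega
  have hplen_n : plen ≤ n := by omega
  -- path and strategies
  set path : ℕ → ∀ i, A i := fun r => cyc (r % K) with hpathdef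
  set nashSt : ℕ → ∀ j, A j → ℝ :=
    fun s => NEσ (e.symm ⟨(s - plen) % Nc, Nat.mod_lt _ hNc⟩) with hnashStdef
  set σstar := combStrat path plen nashSt pun dfltP with hσstardef
  have hcombMix : ∀ j h, IsMixed (σstar j h) :=
    combStrat_mixed path plen nashSt pun dfltP (fun s j => (hNEnash _).1 j)
      (fun d j => hpunMix d j)
  -- on-path prefixes are compliant
  have honpath : ∀ f : Fin n → (∀ i, A i), 0 < histProb σstar [] (List.ofFn f) →
      ∀ t : ℕ, modeA path plen 0 ((List.ofFn f).take t) = none := by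
    intro f hpos t
    have := comb_onpath path plen nashSt pun dfltP hcombMix (List.ofFn f) [] rfl hpos t
    simpa using this
  have htake_len : ∀ (f : Fin n → (∀ i, A i)) (t : Fin n),
      ((List.ofFn f).take t.val).length = t.val := by
    intro f t
    rw [List.length_take, List.length_ofFn]
    have := t.isLt
    omega
  -- stage strategy along compliant prefixes
  have hσpure : ∀ (h : List (∀ i, A i)), modeA path plen 0 h = none → h.length < plen →
      σstar i0 h = pureS (path h.length i0) → True := fun _ _ _ _ => trivial
  have hσform : ∀ (i : N) (h : List (∀ i, A i)), modeA path plen 0 h = none →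
      σstar i h = if h.length < plen then pureS (path h.length i) else nashSt h.length i := by
    intro i h hm
    rw [hσstardef]
    unfold combStrat
    rw [hm]
  -- cardinality of the mixed-stage set
  have hcard : (Finset.univ.filter (fun t : Fin n => plen ≤ t.val)).card ≤ m + K := by
    have h1 : (Finset.univ.filter (fun t : Fin n => plen ≤ t.val)).card ≤
        (Finset.range m').card := by
      apply Finset.card_le_card_of_injOn (fun t => t.val - plen)
      · intro t ht
        simp only [Finset.mem_coe, Finset.mem_filter, Finset.mem_univ, true_and] at ht ⊢
        rw [Finset.mem_range]
        have := t.isLt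
        omega
      · intro a ha b hb hab
        simp only [Finset.mem_coe, Finset.mem_filter, Finset.mem_univ, true_and] at ha hb
        apply Fin.ext
        simp only at hab
        omega
    rw [Finset.card_range] at h1
    omega
  refine ⟨σstar, ⟨hcombMix, ?_⟩, ?_, ?_⟩
  · -- Nash property
    intro i τ hτ
    have hσ'mix := update_strat_mixed σstar hcombMix i τ hτ
    set E : ℕ → ℝ := fun s => expU (u i) (nashSt s) with hEdef
    have hnash_i : ∀ s, plen ≤ s → ∀ ρ : A i → ℝ, IsMixed ρ →
        expU (u i) (Function.update (nashSt s) i ρ) ≤ E s :=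
      fun s _ ρ hρ => (hNEnash _).2 i ρ hρ
    have hEge : ∀ s, v i ≤ E s := fun s => nash_ge_minmax u v i (hv i) _ (hNEnash _)
    have hblock : ∀ (q b : ℕ), K ∣ b →
        ∑ r ∈ Finset.Ico b (b + K * q), u i (path r) = ((K * q : ℕ) : ℝ) * p i := by
      intro q
      induction q with
      | zero => simp
      | succ q ihq =>
          intro b hb
          have h1 : b + K * (q + 1) = (b + K * q) + K := by ring
          rw [h1, ← Finset.sum_Ico_consecutive (fun r => u i (path r))
            (by omega : b ≤ b + K * q) (by omega : b + K * q ≤ b + K * q + K)]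
          rw [ihq b hb]
          have h2 : ∑ r ∈ Finset.Ico (b + K * q) (b + K * q + K), u i (path r)
              = ∑ j ∈ Finset.range K, u i (path (b + K * q + j)) := by
            rw [Finset.sum_Ico_eq_sum_range]
            simp
          have h3 : ∀ j ∈ Finset.range K, u i (path (b + K * q + j)) = u i (cyc j) := by
            intro j hj
            have hjK : j < K := Finset.mem_range.mp hj
            obtain ⟨c0, hc0⟩ : K ∣ b + K * q := by
              obtain ⟨c, hc⟩ := hb
              exact ⟨c + q, by rw [hc]; ring⟩
            have hmodj : (b + K * q + j) % K = j := by
              rw [hc0, Nat.mul_add_mod]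
              exact Nat.mod_eq_of_lt hjK
            rw [hpathdef]
            simp only
            rw [hmodj]
          rw [h2, Finset.sum_congr rfl h3, hcycsum i]
          push_cast
          ring
    have hA : ∀ s, s < plen →
        ((plen - s : ℕ) : ℝ) * v i - 2 * K * M' ≤ ∑ r ∈ Finset.Ico s plen, u i (path r) := by
      intro s hs
      set x := (s + K - 1) / K with hxdef
      have hxe : K * x + (s + K - 1) % K = s + K - 1 := Nat.div_add_mod _ _
      have hmod2 : (s + K - 1) % K < K := Nat.mod_lt _ hK
      have h1 : s ≤ K * x := by omega
      have h2 : K * x ≤ s + K := by omega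
      have hxy : x ≤ q0 := by
        have hKq1 : K * (q0 + 1) = K * q0 + K := by ring
        have hlt : s + K - 1 < (q0 + 1) * K := by
          rw [Nat.mul_comm]
          omega
        have hx1 : x < q0 + 1 := by
          rw [hxdef]
          exact (Nat.div_lt_iff_lt_mul hK).mpr hlt
        omega
      have h3 : K * x ≤ plen := by
        rw [hplenq]
        exact Nat.mul_le_mul_left K hxy
      have hz : K * x + K * (q0 - x) = plen := by
        rw [hplenq, ← Nat.mul_add, Nat.add_sub_cancel' hxy]
      have hs2sum : ∑ r ∈ Finset.Ico (K * x) plen, u i (path r)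
          = ((K * (q0 - x) : ℕ) : ℝ) * p i := by
        conv_lhs => rw [← hz]
        exact hblock (q0 - x) (K * x) (dvd_mul_right K x)
      have hlow : -(((K * x - s : ℕ)) : ℝ) * M' ≤ ∑ r ∈ Finset.Ico s (K * x), u i (path r) := by
        have hstep : ∀ r ∈ Finset.Ico s (K * x), -M' ≤ u i (path r) :=
          fun r _ => (abs_le.mp (hM i _)).1
        have hconst := Finset.sum_le_sum hstep
        rw [Finset.sum_const, Nat.card_Ico, nsmul_eq_mul] at hconst
        calc -(((K * x - s : ℕ)) : ℝ) * M' = ((K * x - s : ℕ) : ℝ) * (-M') := by ring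
          _ ≤ _ := hconst
      have hsplit := Finset.sum_Ico_consecutive (fun r => u i (path r)) h1 h3
      have e3 : ((K * x - s : ℕ) : ℝ) ≤ (K : ℝ) := by
        have : K * x - s ≤ K := by omega
        exact_mod_cast this
      have e4 : ((plen - s : ℕ) : ℝ) = ((K * x - s : ℕ) : ℝ) + ((K * (q0 - x) : ℕ) : ℝ) := by
        have : plen - s = (K * x - s) + K * (q0 - x) := by omega
        exact_mod_cast this
      have e1 : ((K * (q0 - x) : ℕ) : ℝ) * v i ≤ ((K * (q0 - x) : ℕ) : ℝ) * p i :=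
        mul_le_mul_of_nonneg_left (hIR i) (Nat.cast_nonneg _)
      have e2 : ((K * x - s : ℕ) : ℝ) * v i ≤ ((K * x - s : ℕ) : ℝ) * M' :=
        mul_le_mul_of_nonneg_left ((le_abs_self _).trans (hvabs i)) (Nat.cast_nonneg _)
      have e5 : ((K * x - s : ℕ) : ℝ) * M' ≤ (K : ℝ) * M' :=
        mul_le_mul_of_nonneg_right e3 hM0
      rw [e4, add_mul, ← hsplit]
      linarith [hlow, hs2sum, e1, e2, e5]
    have hEi : ∀ q : ℕ, E (plen + (e i).val + Nc * q) = expU (u i) (NEσ i) := by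
      intro q
      have h2 : e.symm ⟨((plen + (e i).val + Nc * q) - plen) % Nc, Nat.mod_lt _ hNc⟩ = i := by
        have h1 : (plen + (e i).val + Nc * q) - plen = (e i).val + Nc * q := by omega
        have h3 : ((e i).val + Nc * q) % Nc = (e i).val := by
          rw [Nat.add_mul_mod_self_left]
          exact Nat.mod_eq_of_lt (e i).isLt
        have h4 : (⟨((plen + (e i).val + Nc * q) - plen) % Nc, Nat.mod_lt _ hNc⟩ : Fin Nc)
            = e i := by
          apply Fin.ext
          simp only
          rw [h1, h3]
        rw [h4, Equiv.symm_apply_apply]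
      rw [hEdef]
      simp only [hnashStdef]
      rw [h2]
    have hB : (m' : ℝ) * v i + L * g ≤ ∑ r ∈ Finset.Ico plen n, E r := by
      set S := (Finset.range L).image (fun q => plen + (e i).val + Nc * q) with hSdef
      have hinj : ∀ q1 ∈ Finset.range L, ∀ q2 ∈ Finset.range L,
          plen + (e i).val + Nc * q1 = plen + (e i).val + Nc * q2 → q1 = q2 := by
        intro q1 _ q2 _ hq
        have hq' : Nc * q1 = Nc * q2 := by omega
        exact Nat.eq_of_mul_eq_mul_left hNc hq'
      have hSsub : S ⊆ Finset.Ico plen n := by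
        intro r hr
        rw [hSdef, Finset.mem_image] at hr
        obtain ⟨q, hq, rfl⟩ := hr
        rw [Finset.mem_Ico]
        have hqL : q < L := Finset.mem_range.mp hq
        have hei : (e i).val < Nc := (e i).isLt
        have h6 : Nc * (q + 1) = Nc * q + Nc := by ring
        have h5 : Nc * (q + 1) ≤ Nc * L := Nat.mul_le_mul_left Nc hqL
        constructor
        · omega
        · omega
      have hsum1 : ∑ r ∈ S, (E r - v i) = L * (expU (u i) (NEσ i) - v i) := by
        rw [hSdef, Finset.sum_image hinj]
        rw [Finset.sum_congr rfl (fun q _ => by rw [hEi q])]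
        rw [Finset.sum_const, Finset.card_range, nsmul_eq_mul]
      have hsum2 : ∑ r ∈ S, (E r - v i) ≤ ∑ r ∈ Finset.Ico plen n, (E r - v i) :=
        Finset.sum_le_sum_of_subset_of_nonneg hSsub (fun r hr _ => by linarith [hEge r])
      have hsum3 : ∑ r ∈ Finset.Ico plen n, (E r - v i)
          = (∑ r ∈ Finset.Ico plen n, E r) - (m' : ℝ) * v i := by
        rw [Finset.sum_sub_distrib, Finset.sum_const, Nat.card_Ico]
        have hnp : n - plen = m' := by omega
        rw [hnp, nsmul_eq_mul]
      have hLgap : (L : ℝ) * g ≤ L * (expU (u i) (NEσ i) - v i) :=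
        mul_le_mul_of_nonneg_left (hgle i) (by positivity)
      linarith
    have hD : ∀ s k', s + (k' + 1) = n → s < plen →
        M' + (k' : ℝ) * v i ≤ (∑ r ∈ Finset.Ico s plen, u i (path r))
          + ∑ r ∈ Finset.Ico plen n, E r := by
      intro s k' hk hs
      have h1 := hA s hs
      have hvM := abs_le.mp (hvabs i)
      have hk'c : (k' : ℝ) = ((plen - s : ℕ) : ℝ) + (m' : ℝ) - 1 := by
        have hnat : k' + 1 = (plen - s) + m' := by omega
        have hc := congrArg (fun x : ℕ => (x : ℝ)) hnat
        push_cast at hc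
        linarith
      have e3 : M' - v i + 2 * K * M' ≤ (L : ℝ) * g := by
        have h7 : M' - v i ≤ 2 * M' := by linarith
        calc M' - v i + 2 * K * M' ≤ 2 * M' + 2 * K * M' := by linarith
          _ = (2 * (K : ℝ) + 2) * M' := by ring
          _ ≤ L * g := hLg
      have hkv : (k' : ℝ) * v i = ((plen - s : ℕ) : ℝ) * v i + (m' : ℝ) * v i - v i := by
        rw [hk'c]; ring
      linarith [hB]
    have hbound := pure_phase_bound path plen nashSt pun dfltP u i τ n E (v i) M'
      hplen_n hσ'mix hτ (hpunLe i) hnash_i (fun a => (abs_le.mp (hM i a)).2) hD n []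
      rfl (by simp) (Nat.zero_le _)
    have heq := pure_phase_eq path plen nashSt pun dfltP u i n E hplen_n hcombMix
      (fun s _ => rfl) n [] rfl (by simp) (Nat.zero_le _)
    rw [avgPay_eq_cumV n u i _ hσ'mix, avgPay_eq_cumV n u i _ hcombMix]
    have hn0 : (0 : ℝ) < n := by
      have hnn : 0 < n := by omega
      exact_mod_cast hnn
    gcongr
    simp only [List.length_nil] at hbound heq
    linarith [hbound, heq]
  · -- few mixed stages
    intro i f hpos
    have hsub : {t : Fin n | ¬ ∃ a : A i, σstar i ((List.ofFn f).take t.val) = pureS a}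
        ⊆ {t : Fin n | plen ≤ t.val} := by
      intro t ht
      simp only [Set.mem_setOf_eq] at ht ⊢
      by_contra hlt
      push_neg at hlt
      apply ht
      refine ⟨path t.val i, ?_⟩
      rw [hσform i _ (honpath f hpos t.val), htake_len f t, if_pos hlt]
    calc {t : Fin n | ¬ ∃ a : A i, σstar i ((List.ofFn f).take t.val) = pureS a}.ncard
        ≤ {t : Fin n | plen ≤ t.val}.ncard := Set.ncard_le_ncard hsub (Set.toFinite _)
      _ ≤ m + K := by
          have heq : {t : Fin n | plen ≤ t.val}
              = ↑(Finset.univ.filter (fun t : Fin n => plen ≤ t.val)) := by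
            ext t
            simp
          rw [heq, Set.ncard_coe_finset]
          exact hcard
  · -- effective entropy
    intro i
    have hβ0 : 0 ≤ β i :=
      le_trans (ent_nonneg _ ((hNEnash i).1 i)) (hβ i (NEσ i) (hNEnash i))
    apply Real.sSup_le
    · rintro x ⟨f, hpos, rfl⟩
      calc ∑ t : Fin n, ent (σstar i ((List.ofFn f).take t.val))
          ≤ ∑ t : Fin n, (if plen ≤ t.val then β i else 0) := by
            apply Finset.sum_le_sum
            intro t _
            rw [hσform i _ (honpath f hpos t.val), htake_len f t]
            by_cases hp : plen ≤ t.val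
            · rw [if_neg (by omega), if_pos hp]
              exact hβ i (NEσ _) (hNEnash _)
            · rw [if_pos (by omega), if_neg hp, ent_pureS]
        _ = ((Finset.univ.filter (fun t : Fin n => plen ≤ t.val)).card : ℝ) * β i := by
            rw [Finset.sum_ite, Finset.sum_const, Finset.sum_const_zero, add_zero,
              nsmul_eq_mul]
        _ ≤ ((m + K : ℕ) : ℝ) * β i := by
            apply mul_le_mul_of_nonneg_right _ hβ0
            exact_mod_cast hcard
    · positivity
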